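/- Let α be a type and let M = FreeMonoid α be the free monoid on α (whose elements are words, i.e. lists, over α). A subset 𝔭 ⊆ M is a prime ideal if and only if there exists a subset J ⊆ α such that 𝔭 = {w ∈ M : some letter of w belongs to J} (equivalently, 𝔭 is the union over j ∈ J of the two-sided ideals M·j·M). -/

import Mathlib

/-- A prime ideal of a (not necessarily commutative) monoid `M`: a two-sided
ideal not containing `1` such that `a * b ∈ 𝔭` implies `a ∈ 𝔭` or `b ∈ 𝔭`. -/
def IsPrimeIdeal {M : Type*} [Monoid M] (𝔭 : Set M) : Prop :=
  (1 : M) ∉ 𝔭 ∧ (∀ m x : M, x ∈ 𝔭 → m * x ∈ 𝔭 ∧ x * m ∈ 𝔭) ∧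
    ∀ a b : M, a * b ∈ 𝔭 → a ∈ 𝔭 ∨ b ∈ 𝔭

/-- The prime ideals of the free monoid on `α` are exactly the sets of words
containing some letter from a fixed subset `J ⊆ α`. -/
theorem primeIdeal_freeMonoid_iff (α : Type*) (𝔭 : Set (FreeMonoid α)) :
    IsPrimeIdeal 𝔭 ↔
      ∃ J : Set α, 𝔭 = {w : FreeMonoid α | ∃ a ∈ J, a ∈ FreeMonoid.toList w} := by
  constructor
  · rintro ⟨h1, hid, hpr⟩
    refine ⟨{a | FreeMonoid.of a ∈ 𝔭}, ?_⟩
    ext w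
    simp only [Set.mem_setOf_eq]
    constructor
    · intro hw
      induction w using FreeMonoid.recOn with
      | one => exact absurd hw h1
      | of_mul a t iht =>
        rcases hpr _ _ hw with h | h
        · exact ⟨a, h, by simp [FreeMonoid.toList_of]⟩
        · obtain ⟨b, hb, hbt⟩ := iht h
          exact ⟨b, hb, by simp [hbt]⟩
    · rintro ⟨a, ha, haw⟩
      obtain ⟨u, v, huv⟩ := List.append_of_mem haw
      have : w = FreeMonoid.ofList u * FreeMonoid.of a * FreeMonoid.ofList v := by
        apply FreeMonoid.toList.injective
        simpa using huv
      rw [this]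
      exact (hid _ _ ((hid (FreeMonoid.ofList u) _ ha).1)).2
  · rintro ⟨J, rfl⟩
    refine ⟨by simp [FreeMonoid.toList_one], ?_, ?_⟩
    · rintro m x ⟨a, ha, hax⟩
      constructor <;> exact ⟨a, ha, by simp [FreeMonoid.toList_mul, hax]⟩
    · rintro a b ⟨c, hc, hcab⟩
      rw [FreeMonoid.toList_mul, List.mem_append] at hcab
      rcases hcab with h | h
      · exact Or.inl ⟨c, hc, h⟩
      · exact Or.inr ⟨c, hc, h⟩
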